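/- Let ε ∼ N(0, Σ) with Σ positive semidefinite of rank r, and let Ψ be positive semidefinite with Σ ⪰ Ψ and Ψ⁺ ⪰ Σ⁺. Define the random variable γ ∈ {0,1} with conditional probability P(γ = 0 | ε = x) = exp(−½ xᵀ(Ψ⁺ − Σ⁺)x). Then the conditional distribution of ε given γ = 0 is N(0, Ψ), i.e., the density of ε restricted by the weight exp(−½ xᵀ(Ψ⁺ − Σ⁺)x) and renormalized equals the N(0, Ψ) density on the common support. -/

import Mathlib

open Matrix MeasureTheory

/-- `B` is the Moore–Penrose pseudoinverse of `A`. -/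
def IsMoorePenroseInv {n : ℕ} (A B : Matrix (Fin n) (Fin n) ℝ) : Prop :=
  A * B * A = A ∧ B * A * B = B ∧ (A * B)ᵀ = A * B ∧ (B * A)ᵀ = B * A

/-- Pseudo-determinant of a symmetric real matrix: the product of its nonzero eigenvalues. -/
noncomputable def pdet {n : ℕ} (A : Matrix (Fin n) (Fin n) ℝ) (hA : A.IsHermitian) : ℝ :=
  ∏ i ∈ Finset.univ.filter (fun i => hA.eigenvalues i ≠ 0), hA.eigenvalues i

/-- Density of `N(0, S)` on its support, where `Sp = S⁺`, `r = rank S`, `pd = pdet S`: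
`x ↦ (2π)^{−r/2} pd^{−1/2} exp(−½ xᵀ S⁺ x)`. -/
noncomputable def gaussPdf {n : ℕ} (Sp : Matrix (Fin n) (Fin n) ℝ) (r : ℕ) (pd : ℝ)
    (x : Fin n → ℝ) : ℝ :=
  (2 * Real.pi) ^ (-(r : ℝ) / 2) * pd ^ (-(1 : ℝ) / 2) *
    Real.exp (-(1/2) * (x ⬝ᵥ Sp.mulVec x))

lemma mp_unique {n : ℕ} {A B C : Matrix (Fin n) (Fin n) ℝ}
    (hB : IsMoorePenroseInv A B) (hC : IsMoorePenroseInv A C) : B = C := by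
  obtain ⟨hB1, hB2, hB3, hB4⟩ := hB
  obtain ⟨hC1, hC2, hC3, hC4⟩ := hC
  have e2 : Aᵀ = Aᵀ * (Cᵀ * Aᵀ) := by
    conv_lhs => rw [← hC1]
    rw [Matrix.transpose_mul, Matrix.transpose_mul]
  have hAB : A * B = A * C := by
    calc A * B = Bᵀ * Aᵀ := by rw [← Matrix.transpose_mul, hB3]
    _ = Bᵀ * (Aᵀ * (Cᵀ * Aᵀ)) := by rw [← e2]
    _ = (Bᵀ * Aᵀ) * (Cᵀ * Aᵀ) := by simp only [Matrix.mul_assoc]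
    _ = (A*B)ᵀ * (A*C)ᵀ := by rw [Matrix.transpose_mul, Matrix.transpose_mul]
    _ = (A*B) * (A*C) := by rw [hB3, hC3]
    _ = (A*B*A) * C := by simp only [Matrix.mul_assoc]
    _ = A * C := by rw [hB1]
  have e3 : Aᵀ = (Aᵀ * Cᵀ) * Aᵀ := by
    conv_lhs => rw [← hC1]
    rw [Matrix.transpose_mul, Matrix.transpose_mul]
    simp only [Matrix.mul_assoc]
  have hBA : B * A = C * A := by
    calc B * A = Aᵀ * Bᵀ := by rw [← Matrix.transpose_mul, hB4]
    _ = ((Aᵀ * Cᵀ) * Aᵀ) * Bᵀ := by rw [← e3]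
    _ = (C*A)ᵀ * (B*A)ᵀ := by
        rw [Matrix.transpose_mul, Matrix.transpose_mul]
        simp only [Matrix.mul_assoc]
    _ = (C*A) * (B*A) := by rw [hB4, hC4]
    _ = C * (A*B*A) := by simp only [Matrix.mul_assoc]
    _ = C * A := by rw [hB1]
  calc B = B * A * B := hB2.symm
  _ = C * A * B := by rw [hBA]
  _ = C * (A * B) := by simp only [Matrix.mul_assoc]
  _ = C * (A * C) := by rw [hAB]
  _ = C * A * C := by simp only [Matrix.mul_assoc]
  _ = C := hC2

lemma mp_symm {n : ℕ} {A B : Matrix (Fin n) (Fin n) ℝ} (hA : Aᵀ = A)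
    (hB : IsMoorePenroseInv A B) : Bᵀ = B := by
  refine mp_unique ?_ hB
  obtain ⟨h1, h2, h3, h4⟩ := hB
  refine ⟨?_, ?_, ?_, ?_⟩
  · have := congrArg Matrix.transpose h1
    simpa [Matrix.transpose_mul, hA, Matrix.mul_assoc] using this
  · have := congrArg Matrix.transpose h2
    simpa [Matrix.transpose_mul, hA, Matrix.mul_assoc] using this
  · have h : A * Bᵀ = B * A := by
      calc A * Bᵀ = Aᵀ * Bᵀ := by rw [hA]
      _ = (B * A)ᵀ := (Matrix.transpose_mul _ _).symm
      _ = B * A := h4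
    rw [h]; exact h4
  · have h : Bᵀ * A = A * B := by
      calc Bᵀ * A = Bᵀ * Aᵀ := by rw [hA]
      _ = (A * B)ᵀ := (Matrix.transpose_mul _ _).symm
      _ = A * B := h3
    rw [h]; exact h3

lemma mp_posSemidef {n : ℕ} {A B : Matrix (Fin n) (Fin n) ℝ} (hA : A.PosSemidef)
    (hB : IsMoorePenroseInv A B) : B.PosSemidef := by
  have hsym : Bᵀ = B := mp_symm (hA.isHermitian) hB
  have : (Bᴴ * A * B).PosSemidef := hA.conjTranspose_mul_mul_same B
  have hBH : Bᴴ = B := hsym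
  rw [hBH] at this
  have : (B * A * B).PosSemidef := this
  rwa [hB.2.1] at this

lemma rank_eq_of_mp {n : ℕ} {A B : Matrix (Fin n) (Fin n) ℝ}
    (hB : IsMoorePenroseInv A B) : A.rank = B.rank := by
  obtain ⟨h1, h2, _, _⟩ := hB
  refine le_antisymm ?_ ?_
  · calc A.rank = (A * B * A).rank := by rw [h1]
    _ ≤ (A * B).rank := Matrix.rank_mul_le_left _ _
    _ ≤ B.rank := Matrix.rank_mul_le_right _ _
  · calc B.rank = (B * A * B).rank := by rw [h2]
    _ ≤ (B * A).rank := Matrix.rank_mul_le_left _ _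
    _ ≤ A.rank := Matrix.rank_mul_le_right _ _

lemma rank_le_of_psd_sub {n : ℕ} {A B : Matrix (Fin n) (Fin n) ℝ}
    (hB : B.PosSemidef) (hAB : (A - B).PosSemidef) : B.rank ≤ A.rank := by
  have hker : LinearMap.ker A.mulVecLin ≤ LinearMap.ker B.mulVecLin := by
    intro v hv
    simp only [LinearMap.mem_ker, Matrix.mulVecLin_apply] at hv ⊢
    have h1 : v ⬝ᵥ (A - B) *ᵥ v ≥ 0 := by
      have := hAB.dotProduct_mulVec_nonneg v
      simpa using this
    have h2 : v ⬝ᵥ B *ᵥ v ≥ 0 := by have := hB.dotProduct_mulVec_nonneg v; simpa using this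
    have h3 : v ⬝ᵥ A *ᵥ v = 0 := by rw [hv, dotProduct_zero]
    have h4 : v ⬝ᵥ B *ᵥ v = 0 := by
      rw [Matrix.sub_mulVec, dotProduct_sub, h3] at h1
      linarith
    have := (hB.dotProduct_mulVec_zero_iff v).mp (by simpa using h4)
    exact this
  have hA := LinearMap.finrank_range_add_finrank_ker A.mulVecLin
  have hBr := LinearMap.finrank_range_add_finrank_ker B.mulVecLin
  have hmono := Submodule.finrank_mono hker
  unfold Matrix.rank
  omega

lemma pdet_pos {n : ℕ} {A : Matrix (Fin n) (Fin n) ℝ} (hA : A.PosSemidef) :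
    0 < pdet A hA.isHermitian := by
  apply Finset.prod_pos
  intro i hi
  simp only [Finset.mem_filter] at hi
  exact lt_of_le_of_ne (hA.eigenvalues_nonneg i) (Ne.symm hi.2)

/-- Gaussianity preservation: reweighting the `N(0,Σ)` density by
`exp(−½ xᵀ(Ψ⁺−Σ⁺)x)` gives, up to the normalizing constant `√(pdet Ψ/pdet Σ)`,
the `N(0,Ψ)` density on the common support. -/
theorem stmt_9 {n : ℕ} (Sig Psi Sigp Psip : Matrix (Fin n) (Fin n) ℝ)
    (hSig : Sig.PosSemidef) (hPsi : Psi.PosSemidef)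
    (hSigp : IsMoorePenroseInv Sig Sigp) (hPsip : IsMoorePenroseInv Psi Psip)
    (hge : (Sig - Psi).PosSemidef) (hgep : (Psip - Sigp).PosSemidef)
    (x : Fin n → ℝ) (hx : x ∈ LinearMap.range Sig.mulVecLin) :
    gaussPdf Sigp Sig.rank (pdet Sig hSig.isHermitian) x *
        Real.exp (-(1/2) * (x ⬝ᵥ (Psip - Sigp).mulVec x))
      = Real.sqrt (pdet Psi hPsi.isHermitian / pdet Sig hSig.isHermitian) *
          gaussPdf Psip Psi.rank (pdet Psi hPsi.isHermitian) x := by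
  have hrank : Sig.rank = Psi.rank := by
    refine le_antisymm ?_ (rank_le_of_psd_sub hPsi hge)
    calc Sig.rank = Sigp.rank := rank_eq_of_mp hSigp
    _ ≤ Psip.rank := rank_le_of_psd_sub (mp_posSemidef hSig hSigp) hgep
    _ = Psi.rank := (rank_eq_of_mp hPsip).symm
  have hpS : 0 < pdet Sig hSig.isHermitian := pdet_pos hSig
  have hpP : 0 < pdet Psi hPsi.isHermitian := pdet_pos hPsi
  set pS := pdet Sig hSig.isHermitian
  set pP := pdet Psi hPsi.isHermitian
  unfold gaussPdf
  rw [hrank, Matrix.sub_mulVec, dotProduct_sub]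
  have hexp : -(1/2) * (x ⬝ᵥ Sigp *ᵥ x) + -(1/2) * (x ⬝ᵥ Psip *ᵥ x - x ⬝ᵥ Sigp *ᵥ x)
      = -(1/2) * (x ⬝ᵥ Psip *ᵥ x) := by ring
  rw [mul_assoc, ← Real.exp_add, hexp]
  have key : ∀ p : ℝ, 0 < p → p ^ (-(1:ℝ)/2) = (Real.sqrt p)⁻¹ := by
    intro p hp
    rw [Real.sqrt_eq_rpow, ← Real.rpow_neg hp.le]
    norm_num
  have hconst : pS ^ (-(1:ℝ)/2) = Real.sqrt (pP / pS) * pP ^ (-(1:ℝ)/2) := by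
    rw [key pS hpS, key pP hpP, Real.sqrt_div hpP.le]
    have h1 : Real.sqrt pP ≠ 0 := ne_of_gt (Real.sqrt_pos.mpr hpP)
    have h2 : Real.sqrt pS ≠ 0 := ne_of_gt (Real.sqrt_pos.mpr hpS)
    field_simp
  rw [hconst]; ring
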